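/- Let T = (Q, Σ, q0, δ) be a deterministic partial transition system with Q and Σ finite and nonempty, where δ : Q × Σ → Q is a partial function. Let C ⊆ Q be a nonempty strongly connected set of states (for all p, q ∈ C there exists a nonempty finite word w with δ*(p, w) = q) that contains at least one internal transition and is reachable from q0 (there is a finite word reaching a state of C from q0). Then there exist a finite word u with |u| < |Q| and a nonempty finite word v with |v| ≤ |Σ|·|Q|² such that the run of T on u v^ω from q0 is infinite (all required transitions are defined) and this run takes every transition (p, a) with p ∈ C, δ(p, a) defined and δ(p, a) ∈ C infinitely often. -/

import Mathlib

/-- The ultimately periodic word `u v^ω` (for `v` nonempty) as a function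
`ℕ → α`. -/
def upWord {α : Type*} (u v : List α) (hv : v ≠ []) : ℕ → α :=
  fun n =>
    if h : n < u.length then u.get ⟨n, h⟩
    else v.get ⟨(n - u.length) % v.length, Nat.mod_lt _ (List.length_pos_iff.mpr hv)⟩

/-- Extension `δ*` of a partial transition function to finite words. -/
def deltaStar {Q A : Type*} (δ : Q → A → Option Q) : Q → List A → Option Q
  | q, [] => some q
  | q, a :: w => (δ q a).bind (fun q' => deltaStar δ q' w)

/-- The (possibly finite) run of a deterministic partial transition system on
an infinite word: `runP δ q0 w n` is the state after `n` steps, `none` if some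
required transition is undefined. -/
def runP {Q A : Type*} (δ : Q → A → Option Q) (q0 : Q) (w : ℕ → A) : ℕ → Option Q
  | 0 => some q0
  | n + 1 => (runP δ q0 w n).bind (fun q => δ q (w n))


lemma deltaStar_append {Q A : Type*} (δ : Q → A → Option Q) (w₁ w₂ : List A) (q : Q) :
    deltaStar δ q (w₁ ++ w₂) = (deltaStar δ q w₁).bind (fun q' => deltaStar δ q' w₂) := by
  induction w₁ generalizing q with
  | nil => simp [deltaStar]
  | cons a w ih =>
    simp only [List.cons_append, deltaStar]
    cases δ q a with
    | none => simp
    | some q' => simp [ih]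

lemma deltaStar_prefix {Q A : Type*} (δ : Q → A → Option Q) {w₁ w₂ : List A} {q r : Q}
    (h : deltaStar δ q (w₁ ++ w₂) = some r) :
    ∃ x, deltaStar δ q w₁ = some x ∧ deltaStar δ x w₂ = some r := by
  rw [deltaStar_append] at h
  exact Option.bind_eq_some_iff.mp h

lemma deltaStar_shorten {Q A : Type*} [Fintype Q] [Nonempty Q] (δ : Q → A → Option Q) :
    ∀ (n : ℕ) (w : List A), w.length ≤ n → ∀ p q, deltaStar δ p w = some q →
      ∃ w', w'.length < Fintype.card Q ∧ deltaStar δ p w' = some q := by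
  intro n
  induction n with
  | zero =>
    intro w hw p q h
    exact ⟨w, lt_of_le_of_lt hw Fintype.card_pos, h⟩
  | succ n ih =>
    intro w hw p q h
    by_cases hlt : w.length < Fintype.card Q
    · exact ⟨w, hlt, h⟩
    push_neg at hlt
    have hpre : ∀ i : ℕ, ∃ x, deltaStar δ p (w.take i) = some x ∧
        deltaStar δ x (w.drop i) = some q := by
      intro i
      apply deltaStar_prefix δ
      rw [List.take_append_drop]; exact h
    choose st h1 h2 using hpre
    obtain ⟨i, j, hij, heq⟩ := Fintype.exists_ne_map_eq_of_card_lt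
      (fun i : Fin (Fintype.card Q + 1) => st i) (by simpa using Nat.lt_succ_self _)
    wlog hlt2 : (i : ℕ) < (j : ℕ) generalizing i j
    · refine this j i hij.symm heq.symm ?_
      have hne : (i : ℕ) ≠ (j : ℕ) := fun hv => hij (Fin.ext hv)
      omega
    have hjle : (j : ℕ) ≤ w.length := le_trans (by omega) hlt
    refine ih (w.take i ++ w.drop j) ?_ p q ?_
    · have : (w.take (i:ℕ)).length = (i:ℕ) := by
        rw [List.length_take]; omega
      rw [List.length_append, this, List.length_drop]; omega
    · rw [deltaStar_append, h1 i]
      rw [Option.bind_some]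
      rw [show st (i:ℕ) = st (j:ℕ) from heq]
      exact h2 j

section Build

variable {Q A : Type*}

def srcHead (r : Q) : List (Q × A × Q) → Q
  | [] => r
  | t :: _ => t.1

def buildWord (conn : Q → Q → List A) (r : Q) : List (Q × A × Q) → List A
  | [] => []
  | t :: rest => t.2.1 :: (conn t.2.2 (srcHead r rest) ++ buildWord conn r rest)

variable (δ : Q → A → Option Q) (C : Set Q) (conn : Q → Q → List A)

lemma srcHead_mem {r : Q} {l : List (Q × A × Q)} (hr : r ∈ C) (hl : ∀ t ∈ l, t.1 ∈ C) :
    srcHead r l ∈ C := by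
  cases l with
  | nil => exact hr
  | cons t rest => exact hl t (by simp)

lemma buildWord_run (hconn : ∀ x y, x ∈ C → y ∈ C → deltaStar δ x (conn x y) = some y)
    {r : Q} (hr : r ∈ C) :
    ∀ l : List (Q × A × Q), (∀ t ∈ l, t.1 ∈ C ∧ δ t.1 t.2.1 = some t.2.2 ∧ t.2.2 ∈ C) →
      deltaStar δ (srcHead r l) (buildWord conn r l) = some r := by
  intro l
  induction l with
  | nil => intro _; rfl
  | cons t rest ih =>
    intro hl
    obtain ⟨h1, h2, h3⟩ := hl t (by simp)
    have hrest : ∀ t ∈ rest, t.1 ∈ C ∧ δ t.1 t.2.1 = some t.2.2 ∧ t.2.2 ∈ C :=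
      fun t ht => hl t (by simp [ht])
    show deltaStar δ t.1 (t.2.1 :: (conn t.2.2 (srcHead r rest) ++ buildWord conn r rest)) = some r
    rw [deltaStar, h2, Option.bind_some, deltaStar_append,
      hconn t.2.2 (srcHead r rest) h3 (srcHead_mem C hr (fun t ht => (hrest t ht).1)),
      Option.bind_some]
    exact ih hrest

lemma buildWord_len {K : ℕ} (hK : 1 ≤ K) (hlen : ∀ x y, (conn x y).length < K) (r : Q) :
    ∀ l : List (Q × A × Q), (buildWord conn r l).length ≤ l.length * K := by
  intro l
  induction l with
  | nil => simp [buildWord]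
  | cons t rest ih =>
    have hc := hlen t.2.2 (srcHead r rest)
    show (t.2.1 :: (conn t.2.2 (srcHead r rest) ++ buildWord conn r rest)).length ≤ _
    rw [List.length_cons, List.length_append, List.length_cons, add_mul, one_mul]
    omega

lemma buildWord_cover (hconn : ∀ x y, x ∈ C → y ∈ C → deltaStar δ x (conn x y) = some y)
    {r : Q} (hr : r ∈ C) :
    ∀ l : List (Q × A × Q), (∀ t ∈ l, t.1 ∈ C ∧ δ t.1 t.2.1 = some t.2.2 ∧ t.2.2 ∈ C) →
      ∀ t ∈ l, ∃ j, ∃ h : j < (buildWord conn r l).length,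
        deltaStar δ (srcHead r l) ((buildWord conn r l).take j) = some t.1 ∧
        (buildWord conn r l)[j] = t.2.1 := by
  intro l
  induction l with
  | nil => intro _ t ht; simp at ht
  | cons t0 rest ih =>
    intro hl t ht
    have hrest : ∀ t ∈ rest, t.1 ∈ C ∧ δ t.1 t.2.1 = some t.2.2 ∧ t.2.2 ∈ C :=
      fun t ht => hl t (by simp [ht])
    obtain ⟨h1, h2, h3⟩ := hl t0 (by simp)
    rcases List.mem_cons.mp ht with rfl | ht'
    · refine ⟨0, by simp [buildWord], ?_, ?_⟩
      · simp [srcHead, deltaStar]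
      · simp [buildWord]
    · obtain ⟨j, hj, hrun, hget⟩ := ih hrest t ht'
      set c := conn t0.2.2 (srcHead r rest) with hc
      set b := buildWord conn r rest with hb
      have hfull : buildWord conn r (t0 :: rest) = (t0.2.1 :: c) ++ b := rfl
      refine ⟨(t0.2.1 :: c).length + j, ?_, ?_, ?_⟩
      · rw [hfull, List.length_append]; omega
      · rw [hfull, List.take_length_add_append]
        show deltaStar δ t0.1 (t0.2.1 :: (c ++ b.take j)) = some t.1
        rw [deltaStar, h2, Option.bind_some, deltaStar_append, hc,
          hconn t0.2.2 (srcHead r rest) h3 (srcHead_mem C hr (fun t ht => (hrest t ht).1)),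
          Option.bind_some]
        exact hrun
      · show ((t0.2.1 :: c) ++ b)[(t0.2.1 :: c).length + j]'(by rw [List.length_append]; omega) = t.2.1
        rw [List.getElem_append_right (by simp)]
        simpa using hget

end Build


lemma upWord_ge {α : Type*} (u v : List α) (hv : v ≠ []) (m : ℕ) :
    upWord u v hv (u.length + m) =
      v[m % v.length]'(Nat.mod_lt _ (List.length_pos_iff.mpr hv)) := by
  simp [upWord]

lemma runP_upWord_le {Q A : Type*} (δ : Q → A → Option Q) (q0 : Q) (u v : List A) (hv : v ≠ []) :
    ∀ n, n ≤ u.length → runP δ q0 (upWord u v hv) n = deltaStar δ q0 (u.take n) := by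
  intro n
  induction n with
  | zero => intro _; rfl
  | succ n ih =>
    intro hn
    have hn' : n < u.length := hn
    rw [runP, ih hn'.le]
    have hW : upWord u v hv n = u[n] := by simp [upWord, hn']
    rw [hW, ← List.take_concat_get hn', List.concat_eq_append, deltaStar_append]
    cases deltaStar δ q0 (u.take n) with
    | none => rfl
    | some x => simp [deltaStar]

lemma runP_upWord_inner {Q A : Type*} (δ : Q → A → Option Q) (q0 s : Q) (u v : List A)
    (hv : v ≠ []) (k : ℕ)
    (hN : runP δ q0 (upWord u v hv) (u.length + k * v.length) = some s) :
    ∀ j, j ≤ v.length →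
      runP δ q0 (upWord u v hv) (u.length + k * v.length + j) = deltaStar δ s (v.take j) := by
  intro j
  induction j with
  | zero => intro _; simpa [deltaStar] using hN
  | succ j ih =>
    intro hj
    have hj' : j < v.length := hj
    rw [show u.length + k * v.length + (j + 1) = (u.length + k * v.length + j) + 1 from by omega,
      runP, ih hj'.le]
    have hW : upWord u v hv (u.length + k * v.length + j) = v[j] := by
      rw [show u.length + k * v.length + j = u.length + (k * v.length + j) from by omega,
        upWord_ge]
      congr 1
      rw [Nat.mul_add_mod', Nat.mod_eq_of_lt hj']
    rw [hW, ← List.take_concat_get hj', List.concat_eq_append, deltaStar_append]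
    cases deltaStar δ s (v.take j) with
    | none => rfl
    | some x => simp [deltaStar]

lemma runP_upWord_piece {Q A : Type*} (δ : Q → A → Option Q) (q0 s : Q) (u v : List A)
    (hv : v ≠ []) (hu : deltaStar δ q0 u = some s) (hs : deltaStar δ s v = some s) :
    ∀ k j, j ≤ v.length →
      runP δ q0 (upWord u v hv) (u.length + k * v.length + j) = deltaStar δ s (v.take j) := by
  have base : ∀ k, runP δ q0 (upWord u v hv) (u.length + k * v.length) = some s := by
    intro k
    induction k with
    | zero =>
      have := runP_upWord_le δ q0 u v hv u.length le_rfl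
      rw [List.take_length, hu] at this
      simpa using this
    | succ k ih =>
      have := runP_upWord_inner δ q0 s u v hv k ih v.length le_rfl
      rw [List.take_length, hs] at this
      rw [show u.length + (k + 1) * v.length = u.length + k * v.length + v.length from by ring]
      exact this
  intro k j hj
  exact runP_upWord_inner δ q0 s u v hv k (base k) j hj

/-- For a deterministic partial transition system over finite
nonempty `Q` and `Σ`, and a nonempty strongly connected set `C ⊆ Q` that has
an internal transition and is reachable from `q0`, there are words `u` with
`|u| < |Q|` and `v ≠ []` with `|v| ≤ |Σ|·|Q|²` such that the run on `u v^ω`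
from `q0` is infinite and takes every internal transition of `C` infinitely
often. -/
theorem exists_upWord_visiting_scc {Q A : Type*}
    [Fintype Q] [Nonempty Q] [Fintype A] [Nonempty A]
    (δ : Q → A → Option Q) (q0 : Q) (C : Set Q) (hCne : C.Nonempty)
    (hconn : ∀ p ∈ C, ∀ q ∈ C, ∃ w : List A, w ≠ [] ∧ deltaStar δ p w = some q)
    (hint : ∃ p ∈ C, ∃ a : A, ∃ q ∈ C, δ p a = some q)
    (hreach : ∃ w : List A, ∃ q ∈ C, deltaStar δ q0 w = some q) :
    ∃ (u v : List A) (hv : v ≠ []),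
      u.length < Fintype.card Q ∧
      v.length ≤ Fintype.card A * Fintype.card Q ^ 2 ∧
      (∀ n, runP δ q0 (upWord u v hv) n ≠ none) ∧
      ∀ p ∈ C, ∀ a : A, ∀ q ∈ C, δ p a = some q →
        {n | runP δ q0 (upWord u v hv) n = some p ∧
          upWord u v hv n = a}.Infinite := by
  classical
  obtain ⟨p₀, hp₀, a₀, q₀', hq₀', hδ₀⟩ := hint
  -- connecting words of bounded length
  have hconnEx : ∀ x y : Q, ∃ w : List A, w.length < Fintype.card Q ∧
      (x ∈ C → y ∈ C → deltaStar δ x w = some y) := by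
    intro x y
    by_cases hx : x ∈ C ∧ y ∈ C
    · obtain ⟨w, -, hw⟩ := hconn x hx.1 y hx.2
      obtain ⟨w', hw1, hw2⟩ := deltaStar_shorten δ w.length w le_rfl x y hw
      exact ⟨w', hw1, fun _ _ => hw2⟩
    · exact ⟨[], Fintype.card_pos, fun h1 h2 => absurd ⟨h1, h2⟩ hx⟩
  choose conn hconnL hconnP using hconnEx
  -- the finset of internal transitions, with chosen targets
  set F : Finset (Q × A) :=
    Finset.univ.filter (fun pa : Q × A => pa.1 ∈ C ∧ ∃ q ∈ C, δ pa.1 pa.2 = some q) with hF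
  have htgtEx : ∀ pa : Q × A, ∃ q : Q, pa ∈ F → (δ pa.1 pa.2 = some q ∧ q ∈ C) := by
    intro pa
    by_cases h : pa ∈ F
    · rw [hF, Finset.mem_filter] at h
      obtain ⟨-, -, q, hq, hδ⟩ := h
      exact ⟨q, fun _ => ⟨hδ, hq⟩⟩
    · exact ⟨Classical.arbitrary Q, fun hh => absurd hh h⟩
  choose tgt htgt using htgtEx
  set l : List (Q × A × Q) := F.toList.map (fun pa => (pa.1, pa.2, tgt pa)) with hldef
  have hlmem : ∀ t ∈ l, t.1 ∈ C ∧ δ t.1 t.2.1 = some t.2.2 ∧ t.2.2 ∈ C := by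
    intro t ht
    rw [hldef, List.mem_map] at ht
    obtain ⟨pa, hpa, rfl⟩ := ht
    have hpaF : pa ∈ F := Finset.mem_toList.mp hpa
    have h1 := htgt pa hpaF
    have h2 := Finset.mem_filter.mp (hF ▸ hpaF)
    exact ⟨h2.2.1, h1.1, h1.2⟩
  have hpaF₀ : (p₀, a₀) ∈ F := by
    rw [hF, Finset.mem_filter]
    exact ⟨Finset.mem_univ _, hp₀, q₀', hq₀', hδ₀⟩
  have hlne : l ≠ [] := by
    intro h
    rw [hldef, List.map_eq_nil_iff] at h
    rw [Finset.toList_eq_nil] at h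
    rw [h] at hpaF₀
    simp at hpaF₀
  obtain ⟨t₀, l', hl0⟩ := List.exists_cons_of_ne_nil hlne
  set r := t₀.1 with hrdef
  have hsrc : srcHead r l = r := by rw [hl0]; rfl
  have hrC : r ∈ C := (hlmem t₀ (hl0 ▸ (List.mem_cons_self (a := t₀) (l := l')))).1
  -- the cycle word v
  set v := buildWord conn r l with hvdef
  have hvne : v ≠ [] := by rw [hvdef, hl0]; simp [buildWord]
  have hsv : deltaStar δ r v = some r := by
    have h := buildWord_run δ C conn hconnP hrC l hlmem
    rwa [hsrc] at h
  have hvlen : v.length ≤ Fintype.card A * Fintype.card Q ^ 2 := by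
    have h1 := buildWord_len conn (K := Fintype.card Q) Fintype.card_pos hconnL r l
    have h2 : l.length = F.card := by rw [hldef]; simp
    have h3 : F.card ≤ Fintype.card (Q × A) := F.card_le_univ
    rw [Fintype.card_prod] at h3
    calc v.length ≤ l.length * Fintype.card Q := h1
      _ ≤ (Fintype.card Q * Fintype.card A) * Fintype.card Q :=
          Nat.mul_le_mul_right _ (h2 ▸ h3)
      _ = Fintype.card A * Fintype.card Q ^ 2 := by ring
  -- the access word u
  obtain ⟨w0, qstar, hqstar, hw0⟩ := hreach
  have hu0 : deltaStar δ q0 (w0 ++ conn qstar r) = some r := by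
    rw [deltaStar_append, hw0, Option.bind_some]
    exact hconnP qstar r hqstar hrC
  obtain ⟨u, hulen, hur⟩ := deltaStar_shorten δ _ _ le_rfl q0 r hu0
  have hvpos : 0 < v.length := List.length_pos_iff.mpr hvne
  have piece := runP_upWord_piece δ q0 r u v hvne hur hsv
  refine ⟨u, v, hvne, hulen, hvlen, ?_, ?_⟩
  · -- totality
    intro n
    by_cases hn : n < u.length
    · rw [runP_upWord_le δ q0 u v hvne n hn.le]
      obtain ⟨x, hx, -⟩ := deltaStar_prefix δ (w₁ := u.take n) (w₂ := u.drop n)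
        (by rw [List.take_append_drop]; exact hur)
      rw [hx]; simp
    · push_neg at hn
      obtain ⟨m, rfl⟩ := Nat.exists_eq_add_of_le hn
      have hdm := Nat.div_add_mod m v.length
      rw [Nat.mul_comm] at hdm
      rw [show u.length + m = u.length + (m / v.length) * v.length + m % v.length from by omega,
        piece (m / v.length) (m % v.length) (Nat.mod_lt _ hvpos).le]
      obtain ⟨x, hx, -⟩ := deltaStar_prefix δ (w₁ := v.take (m % v.length))
        (w₂ := v.drop (m % v.length)) (by rw [List.take_append_drop]; exact hsv)
      rw [hx]; simp
  · -- every internal transition infinitely often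
    intro p hp a q hq hδpq
    have hpaF : (p, a) ∈ F := by
      rw [hF, Finset.mem_filter]
      exact ⟨Finset.mem_univ _, hp, q, hq, hδpq⟩
    have htl : (p, a, tgt (p, a)) ∈ l := by
      rw [hldef]
      exact List.mem_map.mpr ⟨(p, a), Finset.mem_toList.mpr hpaF, rfl⟩
    obtain ⟨j, hj, hrun, hget⟩ := buildWord_cover δ C conn hconnP hrC l hlmem _ htl
    rw [hsrc] at hrun
    refine Set.infinite_of_injective_forall_mem
      (f := fun k : ℕ => u.length + k * v.length + j) (fun k1 k2 h => ?_) (fun k => ?_)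
    · simp only at h
      have h' : k1 * v.length = k2 * v.length := by omega
      exact Nat.eq_of_mul_eq_mul_right hvpos h'
    · simp only [Set.mem_setOf_eq]
      refine ⟨?_, ?_⟩
      · rw [piece k j hj.le]
        exact hrun
      · rw [show u.length + k * v.length + j = u.length + (k * v.length + j) from by omega,
          upWord_ge]
        have hidx : (k * v.length + j) % v.length = j := by
          rw [Nat.mul_add_mod', Nat.mod_eq_of_lt hj]
        simp only [hidx]
        exact hget
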